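/- S_R(ℝ^{2n}) is closed under the canonical Poisson bracket: for all f, g ∈ S_R(ℝ^{2n}) (which are smooth functions, being finite sums of compositions of Schwartz functions with orthogonal projections), the function {f, g} : ℝ^{2n} → ℂ defined by {f, g}(z) = Σ_{j=1}^n (∂_j f(z) · ∂_{n+j} g(z) − ∂_{n+j} f(z) · ∂_j g(z)), where ∂_k denotes the partial derivative in the k-th coordinate direction, again belongs to S_R(ℝ^{2n}). -/

import Mathlib

open Filter Topology
open scoped BoundedContinuousFunction InnerProductSpace

noncomputable section

/-- The Schwartz levees: bounded continuous functions of the form `g ∘ P_V` with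
`V ⊆ X` a finite dimensional subspace and `g` a Schwartz function on `V`. -/
def schwartzLevees (X : Type*) [NormedAddCommGroup X] [InnerProductSpace ℝ X] :
    Set (X →ᵇ ℂ) :=
  {f | ∃ (V : Submodule ℝ X) (hV : FiniteDimensional ℝ V) (g : SchwartzMap V ℂ),
    ∀ y : X, f y = g (letI := hV; V.orthogonalProjectionOnto y)}

/-- `S_R(X)`: the linear span of the Schwartz levees. -/
def SR (X : Type*) [NormedAddCommGroup X] [InnerProductSpace ℝ X] : Set (X →ᵇ ℂ) :=
  ↑(Submodule.span ℂ (schwartzLevees X))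

open scoped SchwartzMap ContDiff
set_option maxHeartbeats 1000000

variable {X : Type*} [NormedAddCommGroup X] [InnerProductSpace ℝ X]

/-- A Schwartz levee as a bounded continuous function. -/
def leveeBCF (V : Submodule ℝ X) [FiniteDimensional ℝ V] (g : 𝓢(V, ℂ)) : X →ᵇ ℂ :=
  BoundedContinuousFunction.ofNormedAddCommGroup
    (fun y => g (Submodule.orthogonalProjectionOnto V y))
    (g.continuous.comp (Submodule.orthogonalProjectionOnto V).continuous)
    (SchwartzMap.seminorm ℝ 0 0 g)
    (fun y => SchwartzMap.norm_le_seminorm ℝ g _)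

lemma leveeBCF_mem (V : Submodule ℝ X) [FiniteDimensional ℝ V] (g : 𝓢(V, ℂ)) :
    leveeBCF V g ∈ schwartzLevees X :=
  ⟨V, inferInstance, g, fun _ => rfl⟩

lemma leveeBCF_mem_SR (V : Submodule ℝ X) [FiniteDimensional ℝ V] (g : 𝓢(V, ℂ)) :
    leveeBCF V g ∈ SR X :=
  Submodule.subset_span (leveeBCF_mem V g)


variable {E V W : Type*} [NormedAddCommGroup E] [NormedSpace ℝ E]
  [NormedAddCommGroup V] [NormedSpace ℝ V] [NormedAddCommGroup W] [NormedSpace ℝ W]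

lemma exists_schwartz_mul_comp (L₁ : E →L[ℝ] V) (L₂ : E →L[ℝ] W)
    (h₁ : ‖L₁‖ ≤ 1) (h₂ : ‖L₂‖ ≤ 1)
    (C : ℝ) (hC : ∀ u, ‖u‖ ≤ C * (‖L₁ u‖ + ‖L₂ u‖))
    (a : 𝓢(V, ℂ)) (b : 𝓢(W, ℂ)) :
    ∃ c : 𝓢(E, ℂ), ∀ u, (c : E → ℂ) u = a (L₁ u) * b (L₂ u) := by
  have hsm1 : ContDiff ℝ ∞ (fun u : E => a (L₁ u)) := (a.smooth ⊤).comp L₁.contDiff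
  have hsm2 : ContDiff ℝ ∞ (fun u : E => b (L₂ u)) := (b.smooth ⊤).comp L₂.contDiff
  -- norm bound for iterated derivatives of the composed factors
  have key1 : ∀ (i : ℕ) (u : E),
      ‖iteratedFDeriv ℝ i (fun x : E => a (L₁ x)) u‖ ≤ ‖iteratedFDeriv ℝ i (⇑a) (L₁ u)‖ := by
    intro i u
    have : (fun x : E => a (L₁ x)) = (⇑a ∘ ⇑L₁) := rfl
    rw [this, L₁.iteratedFDeriv_comp_right (a.smooth ⊤) u (mod_cast le_top)]
    refine (ContinuousMultilinearMap.norm_compContinuousLinearMap_le _ _).trans ?_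
    have : ∏ _j : Fin i, ‖L₁‖ ≤ 1 := by
      apply Finset.prod_le_one <;> intros <;> simp [norm_nonneg, h₁]
    nlinarith [norm_nonneg (iteratedFDeriv ℝ i (⇑a) (L₁ u)), this]
  have key2 : ∀ (i : ℕ) (u : E),
      ‖iteratedFDeriv ℝ i (fun x : E => b (L₂ x)) u‖ ≤ ‖iteratedFDeriv ℝ i (⇑b) (L₂ u)‖ := by
    intro i u
    have : (fun x : E => b (L₂ x)) = (⇑b ∘ ⇑L₂) := rfl
    rw [this, L₂.iteratedFDeriv_comp_right (b.smooth ⊤) u (mod_cast le_top)]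
    refine (ContinuousMultilinearMap.norm_compContinuousLinearMap_le _ _).trans ?_
    have : ∏ _j : Fin i, ‖L₂‖ ≤ 1 := by
      apply Finset.prod_le_one <;> intros <;> simp [norm_nonneg, h₂]
    nlinarith [norm_nonneg (iteratedFDeriv ℝ i (⇑b) (L₂ u)), this]
  refine ⟨⟨fun u => a (L₁ u) * b (L₂ u), hsm1.mul hsm2, ?_⟩, fun u => rfl⟩
  intro k m
  set D := max C 1 with hD
  have hD1 : (1:ℝ) ≤ D := le_max_right _ _
  refine ⟨(2*D)^k * ∑ i ∈ Finset.range (m+1), (m.choose i : ℝ) *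
     ((SchwartzMap.seminorm ℝ k i a * SchwartzMap.seminorm ℝ 0 (m-i) b)
      + (SchwartzMap.seminorm ℝ 0 i a * SchwartzMap.seminorm ℝ k (m-i) b)), fun u => ?_⟩
  have hnn : ∀ x : E, (0:ℝ) ≤ ‖L₁ x‖ + ‖L₂ x‖ := fun x => by positivity
  have hu : ‖u‖ ≤ D * (‖L₁ u‖ + ‖L₂ u‖) := by
    refine (hC u).trans (mul_le_mul_of_nonneg_right (le_max_left _ _) (hnn u))
  have hupow : ‖u‖^k ≤ (2*D)^k * (‖L₁ u‖^k + ‖L₂ u‖^k) := by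
    have h1 : ‖u‖^k ≤ (D * (‖L₁ u‖ + ‖L₂ u‖))^k :=
      pow_le_pow_left₀ (norm_nonneg u) hu k
    have h2 : (‖L₁ u‖ + ‖L₂ u‖)^k ≤ 2^k * (‖L₁ u‖^k + ‖L₂ u‖^k) := by
      calc (‖L₁ u‖ + ‖L₂ u‖)^k ≤ (2 * max ‖L₁ u‖ ‖L₂ u‖)^k := by
            apply pow_le_pow_left₀ (hnn u)
            have := le_max_left ‖L₁ u‖ ‖L₂ u‖
            have := le_max_right ‖L₁ u‖ ‖L₂ u‖
            linarith
        _ = 2^k * (max ‖L₁ u‖ ‖L₂ u‖)^k := mul_pow _ _ _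
        _ ≤ 2^k * (‖L₁ u‖^k + ‖L₂ u‖^k) := by
            apply mul_le_mul_of_nonneg_left _ (by positivity)
            rcases max_cases ‖L₁ u‖ ‖L₂ u‖ with ⟨h, _⟩ | ⟨h, _⟩ <;> rw [h] <;>
              nlinarith [pow_nonneg (norm_nonneg (L₁ u)) k, pow_nonneg (norm_nonneg (L₂ u)) k]
    calc ‖u‖^k ≤ (D * (‖L₁ u‖ + ‖L₂ u‖))^k := h1
      _ = D^k * (‖L₁ u‖ + ‖L₂ u‖)^k := mul_pow _ _ _
      _ ≤ D^k * (2^k * (‖L₁ u‖^k + ‖L₂ u‖^k)) := by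
          apply mul_le_mul_of_nonneg_left h2 (by positivity)
      _ = (2*D)^k * (‖L₁ u‖^k + ‖L₂ u‖^k) := by ring
  have hder : ‖iteratedFDeriv ℝ m (fun y : E => a (L₁ y) * b (L₂ y)) u‖ ≤
      ∑ i ∈ Finset.range (m+1), (m.choose i : ℝ) *
        ‖iteratedFDeriv ℝ i (fun x : E => a (L₁ x)) u‖ *
        ‖iteratedFDeriv ℝ (m-i) (fun x : E => b (L₂ x)) u‖ :=
    norm_iteratedFDeriv_mul_le hsm1 hsm2 u (mod_cast le_top)
  calc ‖u‖^k * ‖iteratedFDeriv ℝ m (fun y : E => a (L₁ y) * b (L₂ y)) u‖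
      ≤ ((2*D)^k * (‖L₁ u‖^k + ‖L₂ u‖^k)) * (∑ i ∈ Finset.range (m+1), (m.choose i : ℝ) *
          ‖iteratedFDeriv ℝ i (fun x : E => a (L₁ x)) u‖ *
          ‖iteratedFDeriv ℝ (m-i) (fun x : E => b (L₂ x)) u‖) :=
        mul_le_mul hupow hder (norm_nonneg _) (by positivity)
    _ = (2*D)^k * ∑ i ∈ Finset.range (m+1), ((‖L₁ u‖^k + ‖L₂ u‖^k) * ((m.choose i : ℝ) *
          ‖iteratedFDeriv ℝ i (fun x : E => a (L₁ x)) u‖ *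
          ‖iteratedFDeriv ℝ (m-i) (fun x : E => b (L₂ x)) u‖)) := by
        rw [Finset.mul_sum, Finset.mul_sum]
        apply Finset.sum_congr rfl
        intros; ring
    _ ≤ (2*D)^k * ∑ i ∈ Finset.range (m+1), (m.choose i : ℝ) *
          ((SchwartzMap.seminorm ℝ k i a * SchwartzMap.seminorm ℝ 0 (m-i) b)
            + (SchwartzMap.seminorm ℝ 0 i a * SchwartzMap.seminorm ℝ k (m-i) b)) := by
        apply mul_le_mul_of_nonneg_left _ (by positivity)
        apply Finset.sum_le_sum
        intro i _
        set t1 := ‖iteratedFDeriv ℝ i (fun x : E => a (L₁ x)) u‖ with ht1d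
        set t2 := ‖iteratedFDeriv ℝ (m-i) (fun x : E => b (L₂ x)) u‖ with ht2d
        have ht1 : 0 ≤ t1 := norm_nonneg _
        have ht2 : 0 ≤ t2 := norm_nonneg _
        have e1 : ‖L₁ u‖^k * t1 ≤ SchwartzMap.seminorm ℝ k i a := by
          refine le_trans (mul_le_mul_of_nonneg_left (key1 i u) (by positivity)) ?_
          exact SchwartzMap.le_seminorm ℝ k i a (L₁ u)
        have e2 : t2 ≤ SchwartzMap.seminorm ℝ 0 (m-i) b :=
          (key2 _ u).trans (SchwartzMap.norm_iteratedFDeriv_le_seminorm ℝ b _ (L₂ u))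
        have e3 : t1 ≤ SchwartzMap.seminorm ℝ 0 i a :=
          (key1 _ u).trans (SchwartzMap.norm_iteratedFDeriv_le_seminorm ℝ a _ (L₁ u))
        have e4 : ‖L₂ u‖^k * t2 ≤ SchwartzMap.seminorm ℝ k (m-i) b := by
          refine le_trans (mul_le_mul_of_nonneg_left (key2 _ u) (by positivity)) ?_
          exact SchwartzMap.le_seminorm ℝ k (m-i) b (L₂ u)
        have hc : (0:ℝ) ≤ (m.choose i : ℝ) := by positivity
        have p1 : ‖L₁ u‖^k * t1 * t2 ≤
            SchwartzMap.seminorm ℝ k i a * SchwartzMap.seminorm ℝ 0 (m-i) b :=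
          mul_le_mul e1 e2 ht2 (apply_nonneg _ _)
        have p2 : ‖L₂ u‖^k * t2 * t1 ≤
            SchwartzMap.seminorm ℝ k (m-i) b * SchwartzMap.seminorm ℝ 0 i a :=
          mul_le_mul e4 e3 ht1 (apply_nonneg _ _)
        nlinarith [mul_le_mul_of_nonneg_left p1 hc, mul_le_mul_of_nonneg_left p2 hc]

variable {X : Type*} [NormedAddCommGroup X] [InnerProductSpace ℝ X]

lemma exists_levee_mul (V W : Submodule ℝ X)
    [FiniteDimensional ℝ V] [FiniteDimensional ℝ W]
    (a : 𝓢(V, ℂ)) (b : 𝓢(W, ℂ)) :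
    ∃ (U : Submodule ℝ X) (_hU : FiniteDimensional ℝ U) (c : 𝓢(U, ℂ)),
      ∀ z : X, a (Submodule.orthogonalProjectionOnto V z) * b (Submodule.orthogonalProjectionOnto W z)
        = c (Submodule.orthogonalProjectionOnto U z) := by
  set U : Submodule ℝ X := V ⊔ W with hUdef
  haveI : FiniteDimensional ℝ U := Submodule.finiteDimensional_sup V W
  set L₁ : U →L[ℝ] V := (Submodule.orthogonalProjectionOnto V).comp U.subtypeL with hL₁
  set L₂ : U →L[ℝ] W := (Submodule.orthogonalProjectionOnto W).comp U.subtypeL with hL₂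
  have hn₁ : ‖L₁‖ ≤ 1 := by
    refine (ContinuousLinearMap.opNorm_comp_le _ _).trans ?_
    have h1 : ‖U.subtypeL‖ ≤ 1 := by
      apply ContinuousLinearMap.opNorm_le_bound _ zero_le_one
      intro x; simp
    nlinarith [Submodule.orthogonalProjectionOnto_norm_le V, ContinuousLinearMap.opNorm_nonneg U.subtypeL,
      ContinuousLinearMap.opNorm_nonneg (Submodule.orthogonalProjectionOnto V)]
  have hn₂ : ‖L₂‖ ≤ 1 := by
    refine (ContinuousLinearMap.opNorm_comp_le _ _).trans ?_
    have h1 : ‖U.subtypeL‖ ≤ 1 := by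
      apply ContinuousLinearMap.opNorm_le_bound _ zero_le_one
      intro x; simp
    nlinarith [Submodule.orthogonalProjectionOnto_norm_le W, ContinuousLinearMap.opNorm_nonneg U.subtypeL,
      ContinuousLinearMap.opNorm_nonneg (Submodule.orthogonalProjectionOnto W)]
  -- the pair map is injective on U
  set G : U →L[ℝ] V × W := L₁.prod L₂ with hG
  have hinj : Function.Injective G := by
    intro u u' huu
    have h0 : G (u - u') = 0 := by rw [map_sub, huu, sub_self]
    have h1 : Submodule.orthogonalProjectionOnto V ((u - u' : U) : X) = 0 := congrArg Prod.fst h0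
    have h2 : Submodule.orthogonalProjectionOnto W ((u - u' : U) : X) = 0 := congrArg Prod.snd h0
    have hV' : ((u - u' : U) : X) ∈ Vᗮ := Submodule.orthogonalProjectionOnto_eq_zero_iff.mp h1
    have hW' : ((u - u' : U) : X) ∈ Wᗮ := Submodule.orthogonalProjectionOnto_eq_zero_iff.mp h2
    obtain ⟨v, hv, w, hw, hvw⟩ := Submodule.mem_sup.mp ((u - u' : U).2)
    have hz : ((u - u' : U) : X) = 0 := by
      have iv : ⟪v, ((u - u' : U) : X)⟫_ℝ = 0 := (Submodule.mem_orthogonal _ _).mp hV' v hv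
      have iw : ⟪w, ((u - u' : U) : X)⟫_ℝ = 0 := (Submodule.mem_orthogonal _ _).mp hW' w hw
      have : ⟪((u - u' : U) : X), ((u - u' : U) : X)⟫_ℝ = 0 := by
        nth_rewrite 1 [← hvw]
        rw [inner_add_left, iv, iw, add_zero]
      exact inner_self_eq_zero.mp this
    have : (u - u' : U) = 0 := Subtype.ext hz
    exact sub_eq_zero.mp this
  -- antilipschitz constant via finite dimensionality
  obtain ⟨C, hC⟩ : ∃ C : ℝ, ∀ u : U, ‖u‖ ≤ C * (‖L₁ u‖ + ‖L₂ u‖) := by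
    set e := LinearEquiv.ofInjective (G : U →ₗ[ℝ] V × W) hinj with he
    set e' := (e.symm.toLinearMap).toContinuousLinearMap with he'
    refine ⟨‖e'‖, fun u => ?_⟩
    have h1 : ‖u‖ ≤ ‖e'‖ * ‖G u‖ := by
      have : u = e' (e u) := by
        simp only [he', LinearMap.coe_toContinuousLinearMap']
        exact (e.symm_apply_apply u).symm
      calc ‖u‖ = ‖e' (e u)‖ := by rw [← this]
        _ ≤ ‖e'‖ * ‖e u‖ := e'.le_opNorm _
        _ = ‖e'‖ * ‖G u‖ := by congr 1
    refine h1.trans (mul_le_mul_of_nonneg_left ?_ (norm_nonneg e'))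
    have : ‖G u‖ = max ‖L₁ u‖ ‖L₂ u‖ := rfl
    rw [this]
    rcases max_cases ‖L₁ u‖ ‖L₂ u‖ with ⟨h, _⟩ | ⟨h, _⟩ <;> rw [h] <;>
      linarith [norm_nonneg (L₁ u), norm_nonneg (L₂ u)]
  obtain ⟨c, hc⟩ := exists_schwartz_mul_comp L₁ L₂ hn₁ hn₂ C hC a b
  refine ⟨U, inferInstance, c, fun z => ?_⟩
  have hV2 : (Submodule.orthogonalProjectionOnto V) z = L₁ ((Submodule.orthogonalProjectionOnto U) z) :=
    (Submodule.orthogonalProjectionOnto_starProjection_of_le le_sup_left z).symm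
  have hW2 : (Submodule.orthogonalProjectionOnto W) z = L₂ ((Submodule.orthogonalProjectionOnto U) z) :=
    (Submodule.orthogonalProjectionOnto_starProjection_of_le le_sup_right z).symm
  rw [hc (Submodule.orthogonalProjectionOnto U z), ← hV2, ← hW2]


lemma mul_mem_SR {f g : X →ᵇ ℂ} (hf : f ∈ SR X) (hg : g ∈ SR X) : f * g ∈ SR X := by
  have hf' : f ∈ Submodule.span ℂ (schwartzLevees X) := hf
  have hg' : g ∈ Submodule.span ℂ (schwartzLevees X) := hg
  show f * g ∈ Submodule.span ℂ (schwartzLevees X)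
  clear hf hg
  induction hf', hg' using Submodule.span_induction₂ with
  | mem_mem x y hx hy =>
      obtain ⟨V, hV, a, ha⟩ := hx
      obtain ⟨W, hW, b, hb⟩ := hy
      haveI := hV; haveI := hW
      obtain ⟨U, hU, c, hc⟩ := exists_levee_mul V W a b
      haveI := hU
      have hxy : x * y = leveeBCF U c := by
        ext z
        show x z * y z = leveeBCF U c z
        rw [ha z, hb z]
        exact hc z
      rw [hxy]; exact Submodule.subset_span (leveeBCF_mem U c)
  | zero_left y hy => rw [zero_mul]; exact Submodule.zero_mem _
  | zero_right x hx => rw [mul_zero]; exact Submodule.zero_mem _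
  | add_left x y z hx hy hz h1 h2 => rw [add_mul]; exact Submodule.add_mem _ h1 h2
  | add_right x y z hx hy hz h1 h2 => rw [mul_add]; exact Submodule.add_mem _ h1 h2
  | smul_left r x y hx hy h => rw [smul_mul_assoc]; exact Submodule.smul_mem _ _ h
  | smul_right r x y hx hy h => rw [mul_smul_comm]; exact Submodule.smul_mem _ _ h

lemma differentiable_and_deriv_mem_SR {f : X →ᵇ ℂ} (hf : f ∈ SR X) :
    Differentiable ℝ ⇑f ∧ ∀ v : X, ∃ Df : X →ᵇ ℂ, Df ∈ SR X ∧
      ∀ z, Df z = fderiv ℝ (⇑f) z v := by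
  have hf' : f ∈ Submodule.span ℂ (schwartzLevees X) := hf
  clear hf
  induction hf' using Submodule.span_induction with
  | mem x hx =>
      obtain ⟨V, hV, a, ha⟩ := hx
      haveI := hV
      have hcoe : ⇑x = fun y => a ((Submodule.orthogonalProjectionOnto V) y) := funext ha
      have hdiff : Differentiable ℝ ⇑x := by
        rw [hcoe]
        exact (a.differentiable).comp (Submodule.orthogonalProjectionOnto V).differentiable
      refine ⟨hdiff, fun v => ?_⟩
      set d : 𝓢(V, ℂ) := SchwartzMap.evalCLM ℝ V ℂ (Submodule.orthogonalProjectionOnto V v)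
        (SchwartzMap.fderivCLM ℝ V ℂ a) with hd
      refine ⟨leveeBCF V d, leveeBCF_mem_SR V d, fun z => ?_⟩
      have h1 : fderiv ℝ (⇑x) z = (fderiv ℝ (⇑a) ((Submodule.orthogonalProjectionOnto V) z)).comp
          (Submodule.orthogonalProjectionOnto V : X →L[ℝ] V) := by
        rw [hcoe]
        rw [show (fun y => a ((Submodule.orthogonalProjectionOnto V) y))
            = (⇑a ∘ ⇑(Submodule.orthogonalProjectionOnto V)) from rfl]
        rw [fderiv_comp z (a.differentiable.differentiableAt)
          ((Submodule.orthogonalProjectionOnto V).differentiableAt), ContinuousLinearMap.fderiv]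
      have h2 : leveeBCF V d z
          = fderiv ℝ (⇑a) ((Submodule.orthogonalProjectionOnto V) z) ((Submodule.orthogonalProjectionOnto V) v) := rfl
      rw [h2, h1]
      rfl
  | zero =>
      constructor
      · rw [BoundedContinuousFunction.coe_zero]
        exact differentiable_const 0
      · intro v
        refine ⟨0, Submodule.zero_mem _, fun z => ?_⟩
        rw [BoundedContinuousFunction.coe_zero]
        show (0:ℂ) = fderiv ℝ (fun _ : X => (0:ℂ)) z v
        rw [fderiv_const_apply]
        rfl
  | add x y hx hy ihx ihy =>
      obtain ⟨hdx, hDx⟩ := ihx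
      obtain ⟨hdy, hDy⟩ := ihy
      have hcoe : ⇑(x + y) = ⇑x + ⇑y := BoundedContinuousFunction.coe_add x y
      constructor
      · rw [hcoe]; exact hdx.add hdy
      · intro v
        obtain ⟨Dx, hDxm, hDxe⟩ := hDx v
        obtain ⟨Dy, hDym, hDye⟩ := hDy v
        refine ⟨Dx + Dy, Submodule.add_mem _ hDxm hDym, fun z => ?_⟩
        rw [hcoe, fderiv_add (hdx z) (hdy z)]
        show Dx z + Dy z = (fderiv ℝ (⇑x) z + fderiv ℝ (⇑y) z) v
        rw [ContinuousLinearMap.add_apply, hDxe z, hDye z]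
  | smul r x hx ihx =>
      obtain ⟨hdx, hDx⟩ := ihx
      have hcoe : ⇑(r • x) = r • ⇑x := BoundedContinuousFunction.coe_smul r x
      constructor
      · rw [hcoe]; exact hdx.const_smul r
      · intro v
        obtain ⟨Dx, hDxm, hDxe⟩ := hDx v
        refine ⟨r • Dx, Submodule.smul_mem _ _ hDxm, fun z => ?_⟩
        rw [hcoe, fderiv_const_smul (hdx z) r]
        show r • Dx z = (r • fderiv ℝ (⇑x) z) v
        rw [ContinuousLinearMap.smul_apply, hDxe z]


/-- `S_R(ℝ^{2n})` is closed under the canonical Poisson bracket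
`{f, g}(z) = Σ_{j=1}^n (∂_j f(z) · ∂_{n+j} g(z) − ∂_{n+j} f(z) · ∂_j g(z))`. -/
theorem poissonBracket_mem_SR (n : ℕ)
    (f g F : EuclideanSpace ℝ (Fin (2 * n)) →ᵇ ℂ)
    (hf : f ∈ SR (EuclideanSpace ℝ (Fin (2 * n))))
    (hg : g ∈ SR (EuclideanSpace ℝ (Fin (2 * n))))
    (hF : ∀ z, F z = ∑ j : Fin n,
      (fderiv ℝ (⇑f) z (EuclideanSpace.single (Fin.cast (by omega) (Fin.castAdd n j)) (1 : ℝ)) *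
        fderiv ℝ (⇑g) z (EuclideanSpace.single (Fin.cast (by omega) (Fin.natAdd n j)) (1 : ℝ)) -
       fderiv ℝ (⇑f) z (EuclideanSpace.single (Fin.cast (by omega) (Fin.natAdd n j)) (1 : ℝ)) *
        fderiv ℝ (⇑g) z (EuclideanSpace.single (Fin.cast (by omega) (Fin.castAdd n j)) (1 : ℝ)))) :
    F ∈ SR (EuclideanSpace ℝ (Fin (2 * n))) := by
  obtain ⟨hdf, hDf⟩ := differentiable_and_deriv_mem_SR hf
  obtain ⟨hdg, hDg⟩ := differentiable_and_deriv_mem_SR hg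
  choose Df hDfm hDfe using hDf
  choose Dg hDgm hDge using hDg
  set v₁ : Fin n → EuclideanSpace ℝ (Fin (2 * n)) := fun j =>
    EuclideanSpace.single (Fin.cast (by omega) (Fin.castAdd n j)) (1 : ℝ) with hv₁
  set v₂ : Fin n → EuclideanSpace ℝ (Fin (2 * n)) := fun j =>
    EuclideanSpace.single (Fin.cast (by omega) (Fin.natAdd n j)) (1 : ℝ) with hv₂
  set G : EuclideanSpace ℝ (Fin (2 * n)) →ᵇ ℂ :=
    ∑ j : Fin n, (Df (v₁ j) * Dg (v₂ j) - Df (v₂ j) * Dg (v₁ j)) with hG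
  have hFG : F = G := by
    ext z
    rw [hF z, hG]
    rw [BoundedContinuousFunction.coe_sum, Finset.sum_apply]
    refine Finset.sum_congr rfl fun j _ => ?_
    rw [BoundedContinuousFunction.coe_sub, Pi.sub_apply,
      BoundedContinuousFunction.coe_mul, Pi.mul_apply,
      BoundedContinuousFunction.coe_mul, Pi.mul_apply,
      hDfe (v₁ j) z, hDfe (v₂ j) z, hDge (v₁ j) z, hDge (v₂ j) z]
  rw [hFG, hG]
  show _ ∈ Submodule.span ℂ (schwartzLevees _)
  exact Submodule.sum_mem _ fun j _ => Submodule.sub_mem _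
    (mul_mem_SR (hDfm _) (hDgm _)) (mul_mem_SR (hDfm _) (hDgm _))
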